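/- Let 0 < α ≤ 1, let r > 1/α be a real number and r' := r/(r−1) its conjugate exponent (so that r'(α−1) + 1 > 0), and let R ≥ 0. Let u₁, u₂ ∈ L^∞([a,b],ℝⁿ) with ‖u₁‖_∞ ≤ R and ‖u₂‖_∞ ≤ R, and y₁, y₂ ∈ ℝⁿ. Setting x(t,u,y) := y + ∫_a^t ((t−s)^{α−1}/Γ(α)) u(s) ds, one has for every t ∈ [a,b]: ‖x(t,u₂,y₂) − x(t,u₁,y₁)‖ ≤ ‖y₂ − y₁‖ + (1/Γ(α)) ( 2R (b−a)^{r'(α−1)+1} / (r'(α−1)+1) )^{1/r'} ‖u₂ − u₁‖_{L¹}^{1/r}. -/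

import Mathlib

open MeasureTheory Set

theorem stmt_15 (n : ℕ) (hn : 1 ≤ n) (a b : ℝ) (hab : a < b)
    (α : ℝ) (hα0 : 0 < α) (hα1 : α ≤ 1)
    (r : ℝ) (hr : 1 / α < r) (R : ℝ) (hR : 0 ≤ R)
    (u₁ u₂ : ℝ → EuclideanSpace ℝ (Fin n)) (hm₁ : Measurable u₁) (hm₂ : Measurable u₂)
    (hb₁ : ∀ᵐ s ∂(volume : Measure ℝ), s ∈ Icc a b → ‖u₁ s‖ ≤ R)
    (hb₂ : ∀ᵐ s ∂(volume : Measure ℝ), s ∈ Icc a b → ‖u₂ s‖ ≤ R)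
    (y₁ y₂ : EuclideanSpace ℝ (Fin n)) :
    ∀ t ∈ Icc a b,
      ‖(y₂ + ∫ s in a..t, ((t - s) ^ (α - 1) / Real.Gamma α) • u₂ s)
          - (y₁ + ∫ s in a..t, ((t - s) ^ (α - 1) / Real.Gamma α) • u₁ s)‖
        ≤ ‖y₂ - y₁‖ + (1 / Real.Gamma α) *
            (2 * R * (b - a) ^ ((r / (r - 1)) * (α - 1) + 1) /
              ((r / (r - 1)) * (α - 1) + 1)) ^ (1 / (r / (r - 1))) *
            (∫ s in a..b, ‖u₂ s - u₁ s‖) ^ (1 / r) := by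
  intro t ht
  obtain ⟨hat, htb⟩ := ht
  have hΓ : 0 < Real.Gamma α := Real.Gamma_pos_of_pos hα0
  have hr1 : 1 < r := by
    have h1 : 1 ≤ 1 / α := by rw [le_div_iff₀ hα0]; linarith
    linarith
  set r' := r / (r - 1) with hr'def
  have hconj : r'.HolderConjugate r := (Real.HolderConjugate.conjExponent hr1).symm
  have hr'1 : 1 < r' := hconj.lt
  have hrα : 1 < r * α := by rw [div_lt_iff₀ hα0] at hr; linarith
  set β := r' * (α - 1) + 1 with hβdef
  have hβmul : β * (r - 1) = r * α - 1 := by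
    have hne : r - 1 ≠ 0 := by linarith
    have h : r' * (r - 1) = r := by
      rw [hr'def]; field_simp
    calc β * (r - 1) = r' * (r - 1) * (α - 1) + (r - 1) := by rw [hβdef]; ring
      _ = r * (α - 1) + (r - 1) := by rw [h]
      _ = r * α - 1 := by ring
  have hβ : 0 < β := by nlinarith [hβmul, hrα, hr1]
  have hem : (-1 : ℝ) < (α - 1) * r' := by
    have : (α - 1) * r' + 1 = β := by rw [hβdef]; ring
    linarith
  set μ := volume.restrict (Ioc a t) with hμdef
  set f : ℝ → ℝ := fun s => (t - s) ^ (α - 1) with hfdef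
  set g : ℝ → ℝ := fun s => ‖u₂ s - u₁ s‖ with hgdef
  have hsub : Ioc a t ⊆ Icc a b := fun s hs => ⟨hs.1.le, hs.2.trans htb⟩
  -- integrability of powers of (t - s)
  have hpow : ∀ e : ℝ, (-1 : ℝ) < e → IntegrableOn (fun s => (t - s) ^ e) (Ioc a t) volume := by
    intro e he
    have h2 := (intervalIntegral.intervalIntegrable_rpow' (a := t - a) (b := 0) he).comp_sub_left t
    rw [sub_sub_cancel, sub_zero] at h2
    exact (intervalIntegrable_iff_integrableOn_Ioc_of_le hat).mp h2
  -- measurability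
  have hmf : Measurable f := (measurable_const.sub measurable_id).pow measurable_const
  have hmg : Measurable g := (hm₂.sub hm₁).norm
  -- a.e. bounds on μ
  have hgb : ∀ᵐ s ∂μ, g s ≤ 2 * R := by
    filter_upwards [ae_restrict_of_ae hb₁, ae_restrict_of_ae hb₂,
      ae_restrict_mem measurableSet_Ioc] with s h1 h2 hs
    calc g s ≤ ‖u₂ s‖ + ‖u₁ s‖ := norm_sub_le _ _
      _ ≤ R + R := add_le_add (h2 (hsub hs)) (h1 (hsub hs))
      _ = 2 * R := by ring
  have hgb' : ∀ᵐ s ∂(volume.restrict (Ioc a b)), g s ≤ 2 * R := by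
    filter_upwards [ae_restrict_of_ae hb₁, ae_restrict_of_ae hb₂,
      ae_restrict_mem measurableSet_Ioc] with s h1 h2 hs
    calc g s ≤ ‖u₂ s‖ + ‖u₁ s‖ := norm_sub_le _ _
      _ ≤ R + R := add_le_add (h2 ⟨hs.1.le, hs.2⟩) (h1 ⟨hs.1.le, hs.2⟩)
      _ = 2 * R := by ring
  have hg_int_ab : IntegrableOn g (Ioc a b) volume := by
    apply Integrable.mono' (integrable_const (2 * R)) hmg.aestronglyMeasurable
    filter_upwards [hgb'] with s hs
    rwa [Real.norm_eq_abs, abs_of_nonneg (norm_nonneg _)]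
  have hg_int : Integrable g μ := by
    apply Integrable.mono' (integrable_const (2 * R)) hmg.aestronglyMeasurable
    filter_upwards [hgb] with s hs
    rwa [Real.norm_eq_abs, abs_of_nonneg (norm_nonneg _)]
  -- integrability of the integrands
  have hint : ∀ (u : ℝ → EuclideanSpace ℝ (Fin n)), Measurable u →
      (∀ᵐ s ∂(volume : Measure ℝ), s ∈ Icc a b → ‖u s‖ ≤ R) →
      IntervalIntegrable (fun s => ((t - s) ^ (α - 1) / Real.Gamma α) • u s) volume a t := by
    intro u hu hb
    rw [intervalIntegrable_iff_integrableOn_Ioc_of_le hat]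
    apply Integrable.mono' ((hpow (α - 1) (by linarith)).mul_const (R / Real.Gamma α))
    · exact ((hmf.div_const _).smul hu).aestronglyMeasurable
    · filter_upwards [ae_restrict_of_ae hb, ae_restrict_mem measurableSet_Ioc] with s hs hmem
      have h0 : (0 : ℝ) ≤ t - s := sub_nonneg.2 hmem.2
      rw [norm_smul, Real.norm_eq_abs,
        abs_of_nonneg (div_nonneg (Real.rpow_nonneg h0 _) hΓ.le)]
      have : (t - s) ^ (α - 1) * (R / Real.Gamma α)
          = (t - s) ^ (α - 1) / Real.Gamma α * R := by ring
      rw [this]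
      exact mul_le_mul_of_nonneg_left (hs (hsub hmem))
        (div_nonneg (Real.rpow_nonneg h0 _) hΓ.le)
  have h₁ := hint u₁ hm₁ hb₁
  have h₂ := hint u₂ hm₂ hb₂
  -- Memℒp facts
  have hg_mem : MemLp g (ENNReal.ofReal r) μ := by
    apply MemLp.of_bound hmg.aestronglyMeasurable (2 * R)
    filter_upwards [hgb] with s hs
    rwa [Real.norm_eq_abs, abs_of_nonneg (norm_nonneg _)]
  have hfae : ∀ᵐ s ∂μ, 0 ≤ t - s := by
    filter_upwards [ae_restrict_mem measurableSet_Ioc] with s hs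
    exact sub_nonneg.2 hs.2
  have hi : Integrable (fun s => ‖f s‖ ^ r') μ := by
    apply (hpow ((α - 1) * r') hem).congr
    filter_upwards [hfae] with s h0
    rw [hfdef]
    simp only []
    rw [Real.norm_eq_abs, abs_of_nonneg (Real.rpow_nonneg h0 _), ← Real.rpow_mul h0]
  have hf_mem : MemLp f (ENNReal.ofReal r') μ := by
    have h1 : (ENNReal.ofReal r') ≠ 0 := by
      simp [ENNReal.ofReal_eq_zero, not_le, hconj.pos]
    have h2 : (ENNReal.ofReal r') ≠ ⊤ := ENNReal.ofReal_ne_top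
    rw [← memLp_norm_rpow_iff hmf.aestronglyMeasurable h1 h2]
    rw [ENNReal.toReal_ofReal hconj.nonneg, ENNReal.div_self h1 h2,
      memLp_one_iff_integrable]
    exact hi
  -- Hölder
  have holder : ∫ s, f s * g s ∂μ
      ≤ (∫ s, f s ^ r' ∂μ) ^ (1 / r') * (∫ s, g s ^ r ∂μ) ^ (1 / r) := by
    refine integral_mul_le_Lp_mul_Lq_of_nonneg hconj ?_
      (Filter.Eventually.of_forall fun s => norm_nonneg _) hf_mem hg_mem
    filter_upwards [hfae] with s h0
    exact Real.rpow_nonneg h0 _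
  -- value of ∫ f ^ r'
  have hfint : ∫ s, f s ^ r' ∂μ = (t - a) ^ β / β := by
    have step1 : ∫ s, f s ^ r' ∂μ = ∫ s in a..t, (t - s) ^ ((α - 1) * r') := by
      rw [intervalIntegral.integral_of_le hat]
      apply setIntegral_congr_fun measurableSet_Ioc
      intro s hs
      have h0 : (0 : ℝ) ≤ t - s := sub_nonneg.2 hs.2
      rw [hfdef]
      simp only []
      rw [← Real.rpow_mul h0]
    rw [step1, intervalIntegral.integral_comp_sub_left (fun x => x ^ ((α - 1) * r')) t,
      sub_self, integral_rpow (Or.inl hem)]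
    have hβ' : (α - 1) * r' + 1 = β := by rw [hβdef]; ring
    rw [hβ', Real.zero_rpow hβ.ne', sub_zero]
  -- bound on ∫ g ^ r
  have hgr_int : Integrable (fun s => g s ^ r) μ := by
    apply Integrable.mono' (integrable_const ((2 * R) ^ r))
      (hmg.pow measurable_const).aestronglyMeasurable
    filter_upwards [hgb] with s hs
    rw [Real.norm_eq_abs, abs_of_nonneg (Real.rpow_nonneg (norm_nonneg _) _)]
    exact Real.rpow_le_rpow (norm_nonneg _) hs (by linarith)
  have hgr : ∫ s, g s ^ r ∂μ ≤ (2 * R) ^ (r - 1) * ∫ s in Ioc a b, g s := by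
    have step1 : ∫ s, g s ^ r ∂μ ≤ ∫ s, (2 * R) ^ (r - 1) * g s ∂μ := by
      apply integral_mono_ae hgr_int (hg_int.const_mul _)
      filter_upwards [hgb] with s hs
      rcases eq_or_lt_of_le (norm_nonneg (u₂ s - u₁ s)) with h0 | h0
      · rw [hgdef]
        simp only []
        rw [← h0, Real.zero_rpow (by positivity), mul_zero]
      · have : g s ^ r = g s ^ (r - 1) * g s := by
          rw [← Real.rpow_add_one h0.ne' (r - 1), sub_add_cancel]
        rw [this]
        exact mul_le_mul_of_nonneg_right
          (Real.rpow_le_rpow (le_of_lt h0) hs (by linarith)) (le_of_lt h0)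
    have step2 : ∫ s, (2 * R) ^ (r - 1) * g s ∂μ
        = (2 * R) ^ (r - 1) * ∫ s, g s ∂μ := integral_const_mul _ _
    have step3 : ∫ s, g s ∂μ ≤ ∫ s in Ioc a b, g s := by
      apply setIntegral_mono_set hg_int_ab
        (Filter.Eventually.of_forall fun s => norm_nonneg _)
      exact Filter.Eventually.of_forall (Ioc_subset_Ioc le_rfl htb)
    calc ∫ s, g s ^ r ∂μ ≤ (2 * R) ^ (r - 1) * ∫ s, g s ∂μ := step1.trans_eq step2
      _ ≤ (2 * R) ^ (r - 1) * ∫ s in Ioc a b, g s :=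
          mul_le_mul_of_nonneg_left step3 (Real.rpow_nonneg (by positivity) _)
  -- put together the norm of the integral difference
  set J := ∫ s in Ioc a b, g s with hJdef
  have hJ0 : 0 ≤ J := setIntegral_nonneg measurableSet_Ioc fun s _ => norm_nonneg _
  have hIbound : ‖∫ s in a..t, ((t - s) ^ (α - 1) / Real.Gamma α) • (u₂ s - u₁ s)‖
      ≤ (1 / Real.Gamma α) * ∫ s, f s * g s ∂μ := by
    calc ‖∫ s in a..t, ((t - s) ^ (α - 1) / Real.Gamma α) • (u₂ s - u₁ s)‖
        ≤ ∫ s in a..t, ‖((t - s) ^ (α - 1) / Real.Gamma α) • (u₂ s - u₁ s)‖ :=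
          intervalIntegral.norm_integral_le_integral_norm hat
      _ = ∫ s, (1 / Real.Gamma α) * (f s * g s) ∂μ := by
          rw [intervalIntegral.integral_of_le hat]
          apply setIntegral_congr_fun measurableSet_Ioc
          intro s hs
          have h0 : (0 : ℝ) ≤ t - s := sub_nonneg.2 hs.2
          dsimp only
          rw [norm_smul, Real.norm_eq_abs,
            abs_of_nonneg (div_nonneg (Real.rpow_nonneg h0 _) hΓ.le)]
          rw [hfdef, hgdef]
          simp only []
          ring
      _ = (1 / Real.Gamma α) * ∫ s, f s * g s ∂μ := integral_const_mul _ _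
  -- main estimate on the convolution integral
  have hmain : ‖∫ s in a..t, ((t - s) ^ (α - 1) / Real.Gamma α) • (u₂ s - u₁ s)‖
      ≤ (1 / Real.Gamma α) * (2 * R * (b - a) ^ β / β) ^ (1 / r') * J ^ (1 / r) := by
    have hba : (0 : ℝ) ≤ b - a := by linarith
    have hfg0 : 0 ≤ ∫ s, g s ^ r ∂μ := by
      apply integral_nonneg
      intro s; exact Real.rpow_nonneg (norm_nonneg _) _
    have h2R : (0 : ℝ) ≤ 2 * R := by positivity
    have hta : (0 : ℝ) ≤ t - a := by linarith
    have hA : (∫ s, f s ^ r' ∂μ) ^ (1 / r') ≤ ((b - a) ^ β / β) ^ (1 / r') := by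
      apply Real.rpow_le_rpow
      · rw [hfint]
        exact div_nonneg (Real.rpow_nonneg hta _) hβ.le
      · rw [hfint]
        gcongr <;> linarith
      · positivity
    have hB : (∫ s, g s ^ r ∂μ) ^ (1 / r) ≤ ((2 * R) ^ (r - 1) * J) ^ (1 / r) :=
      Real.rpow_le_rpow hfg0 hgr (by positivity)
    have hkey : ((2 * R) ^ (r - 1) * J) ^ (1 / r) = (2 * R) ^ (1 / r') * J ^ (1 / r) := by
      rw [Real.mul_rpow (Real.rpow_nonneg h2R _) hJ0, ← Real.rpow_mul h2R, mul_one_div]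
      congr 2
      rw [hr'def, one_div_div]
    have hkey2 : ((b - a) ^ β / β) ^ (1 / r') * (2 * R) ^ (1 / r')
        = (2 * R * (b - a) ^ β / β) ^ (1 / r') := by
      rw [← Real.mul_rpow (div_nonneg (Real.rpow_nonneg hba _) hβ.le) h2R]
      congr 1
      ring
    calc ‖∫ s in a..t, ((t - s) ^ (α - 1) / Real.Gamma α) • (u₂ s - u₁ s)‖
        ≤ (1 / Real.Gamma α) * ∫ s, f s * g s ∂μ := hIbound
      _ ≤ (1 / Real.Gamma α) *
            ((∫ s, f s ^ r' ∂μ) ^ (1 / r') * (∫ s, g s ^ r ∂μ) ^ (1 / r)) :=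
          mul_le_mul_of_nonneg_left holder (one_div_nonneg.mpr hΓ.le)
      _ ≤ (1 / Real.Gamma α) *
            (((b - a) ^ β / β) ^ (1 / r') * (((2 * R) ^ (r - 1) * J) ^ (1 / r))) := by
          apply mul_le_mul_of_nonneg_left _ (one_div_nonneg.mpr hΓ.le)
          exact mul_le_mul hA hB (Real.rpow_nonneg hfg0 _)
            (Real.rpow_nonneg (div_nonneg (Real.rpow_nonneg hba _) hβ.le) _)
      _ = (1 / Real.Gamma α) * (2 * R * (b - a) ^ β / β) ^ (1 / r') * J ^ (1 / r) := by
          rw [hkey, ← hkey2]; ring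
  -- conclude
  have hsplit : (y₂ + ∫ s in a..t, ((t - s) ^ (α - 1) / Real.Gamma α) • u₂ s)
      - (y₁ + ∫ s in a..t, ((t - s) ^ (α - 1) / Real.Gamma α) • u₁ s)
      = (y₂ - y₁) + ∫ s in a..t, ((t - s) ^ (α - 1) / Real.Gamma α) • (u₂ s - u₁ s) := by
    rw [show (∫ s in a..t, ((t - s) ^ (α - 1) / Real.Gamma α) • (u₂ s - u₁ s))
        = (∫ s in a..t, ((t - s) ^ (α - 1) / Real.Gamma α) • u₂ s)
          - ∫ s in a..t, ((t - s) ^ (α - 1) / Real.Gamma α) • u₁ s from ?_]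
    · abel
    · rw [← intervalIntegral.integral_sub h₂ h₁]
      simp [smul_sub]
  rw [hsplit, intervalIntegral.integral_of_le hab.le]
  calc ‖(y₂ - y₁) + ∫ s in a..t, ((t - s) ^ (α - 1) / Real.Gamma α) • (u₂ s - u₁ s)‖
      ≤ ‖y₂ - y₁‖ + ‖∫ s in a..t, ((t - s) ^ (α - 1) / Real.Gamma α) • (u₂ s - u₁ s)‖ :=
        norm_add_le _ _
    _ ≤ ‖y₂ - y₁‖ + (1 / Real.Gamma α) * (2 * R * (b - a) ^ β / β) ^ (1 / r') * J ^ (1 / r) :=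
        add_le_add_right hmain _
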